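/- For all x > 0, the Gamma function satisfies (2π)^{1/2} x^{x-1/2} e^{-x} ≤ Γ(x) ≤ (2π)^{1/2} e^{1/(12x)} x^{x-1/2} e^{-x}. -/

import Mathlib

open Real Filter Topology

noncomputable def sf (x : ℝ) : ℝ := (x + 1/2) * Real.log (1 + 1/x) - 1

lemma sf_hasSum {x : ℝ} (hx : 0 < x) :
    HasSum (fun k : ℕ => (1:ℝ) / (2 * (k+1) + 1) * ((1 / (2*x+1))^2) ^ (k+1)) (sf x) := by
  have h := (hasSum_log_one_add_inv hx).mul_left (x + 1/2)
  have h2x : (2*x+1) ≠ 0 := by positivity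
  have h' : HasSum (fun k : ℕ => (1:ℝ) / (2 * k + 1) * ((1 / (2*x+1))^2) ^ k)
      ((x + 1/2) * Real.log (1 + 1/x)) := by
    convert h using 2 with k
    · rfl
    · rw [← pow_mul, pow_succ]
      field_simp
    · rw [one_div, inv_eq_one_div]
  have := (hasSum_nat_add_iff' 1).mpr h'
  simpa [sf] using this

lemma sf_nonneg {x : ℝ} (hx : 0 < x) : 0 ≤ sf x :=
  (sf_hasSum hx).nonneg fun k => by positivity

lemma sf_le {x : ℝ} (hx : 0 < x) : sf x ≤ 1/(12*x) - 1/(12*(x+1)) := by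
  set u : ℝ := (1 / (2*x+1))^2 with hu
  have hu0 : 0 ≤ u := sq_nonneg _
  have hu1 : u < 1 := by
    rw [hu, one_div, inv_pow]
    exact inv_lt_one_of_one_lt₀ (one_lt_pow₀ (by nlinarith) two_ne_zero)
  have hgeo : HasSum (fun k : ℕ => (1:ℝ)/3 * u ^ (k+1)) (1/3 * (u / (1 - u))) := by
    have := (hasSum_geometric_of_lt_one hu0 hu1).mul_left (u/3)
    have e1 : (fun k : ℕ => (1:ℝ)/3 * u ^ (k+1)) = fun i => u/3 * u ^ i := by
      funext i; ring
    have e2 : 1/3 * (u / (1 - u)) = u/3 * (1-u)⁻¹ := by ring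
    rw [e1, e2]; exact this
  have hle : sf x ≤ 1/3 * (u / (1-u)) := by
    refine hasSum_le (fun k => ?_) (sf_hasSum hx) hgeo
    have : (1:ℝ) / (2 * ((k:ℝ)+1) + 1) ≤ 1/3 := by
      apply div_le_div_of_nonneg_left one_pos.le (by norm_num)
      push_cast; linarith [Nat.cast_nonneg (α := ℝ) k]
    exact mul_le_mul_of_nonneg_right this (pow_nonneg hu0 _)
  refine hle.trans (le_of_eq ?_)
  have h2 : (1:ℝ) - u = (4*x*(x+1))/((2*x+1)^2) := by
    rw [hu]; field_simp; ring
  rw [h2, hu]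
  have hx1 : x + 1 ≠ 0 := by positivity
  have h3 : (2*x+1:ℝ) ≠ 0 := by positivity
  field_simp
  ring




noncomputable def smu (x : ℝ) : ℝ := ∑' n : ℕ, sf (x + n)


lemma tele_hasSum {x : ℝ} (hx : 0 < x) :
    HasSum (fun n : ℕ => 1/(12*(x+n)) - 1/(12*(x+n+1))) (1/(12*x)) := by
  have hpos : ∀ n : ℕ, (0:ℝ) < x + n := fun n => by positivity
  have hnn : ∀ n : ℕ, (0:ℝ) ≤ 1/(12*(x+n)) - 1/(12*(x+n+1)) := by
    intro n
    have h1 : (0:ℝ) < 12*(x+n) := by positivity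
    have h2 : (0:ℝ) < 12*(x+n+1) := by positivity
    have : (1:ℝ)/(12*(x+n+1)) ≤ 1/(12*(x+n)) :=
      one_div_le_one_div_of_le h1 (by linarith)
    linarith
  rw [hasSum_iff_tendsto_nat_of_nonneg hnn]
  have hsum : ∀ n : ℕ, ∑ i ∈ Finset.range n, (1/(12*(x+i)) - 1/(12*(x+i+1)))
      = 1/(12*x) - 1/(12*(x+n)) := by
    intro n
    have := Finset.sum_range_sub' (f := fun i : ℕ => 1/(12*(x+(i:ℝ)))) n
    rw [show (1:ℝ)/(12*x) = 1/(12*(x+(0:ℕ))) by norm_num, ← this]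
    apply Finset.sum_congr rfl
    intro i _
    push_cast
    ring_nf
  simp_rw [hsum]
  have h0 : Tendsto (fun n : ℕ => 1/(12*(x+(n:ℝ)))) atTop (nhds 0) := by
    apply Tendsto.comp tendsto_inv_atTop_zero ?_ |>.congr (fun n => by rw [Function.comp, one_div])
    have : Tendsto (fun n : ℕ => x + (n:ℝ)) atTop atTop :=
      tendsto_atTop_add_const_left _ _ (tendsto_natCast_atTop_atTop (R := ℝ))
    exact this.const_mul_atTop (by norm_num)
  simpa using tendsto_const_nhds.sub h0

lemma summable_sf {x : ℝ} (hx : 0 < x) : Summable (fun n : ℕ => sf (x + n)) :=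
  Summable.of_nonneg_of_le (fun n => sf_nonneg (by positivity))
    (fun n => sf_le (show (0:ℝ) < x + n by positivity)) (tele_hasSum hx).summable

lemma smu_nonneg {x : ℝ} (hx : 0 < x) : 0 ≤ smu x :=
  tsum_nonneg fun n => sf_nonneg (by positivity)

lemma smu_le {x : ℝ} (hx : 0 < x) : smu x ≤ 1/(12*x) :=
  hasSum_le (fun n => sf_le (by positivity)) (summable_sf hx).hasSum (tele_hasSum hx)

lemma smu_rec {x : ℝ} (hx : 0 < x) : smu x = sf x + smu (x+1) := by
  rw [smu, Summable.tsum_eq_zero_add (summable_sf hx)]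
  congr 1
  · norm_num
  · rw [smu]
    congr 1 with n
    push_cast
    ring_nf

lemma S_lim : Tendsto (fun n : ℕ => Real.log (Nat.factorial n : ℝ) - ((n:ℝ) + 1/2) * Real.log n + n)
    atTop (𝓝 ((1/2) * Real.log (2*π))) := by
  have h1 : Tendsto (fun n : ℕ => Real.log (Stirling.stirlingSeq n) + 1/2 * Real.log 2)
      atTop (𝓝 (Real.log (Real.sqrt π) + 1/2 * Real.log 2)) := by
    exact (((Real.continuousAt_log (by positivity)).tendsto).comp
      Stirling.tendsto_stirlingSeq_sqrt_pi).add_const _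
  have heq : Real.log (Real.sqrt π) + 1/2 * Real.log 2 = 1/2 * Real.log (2*π) := by
    rw [Real.log_sqrt pi_pos.le, Real.log_mul two_ne_zero pi_pos.ne']
    ring
  rw [heq] at h1
  apply h1.congr'
  filter_upwards [eventually_ge_atTop 1] with n hn
  have hn0 : (0:ℝ) < n := by exact_mod_cast hn
  rw [Stirling.log_stirlingSeq_formula n, Real.log_mul two_ne_zero hn0.ne',
    Real.log_div hn0.ne' (exp_ne_zero 1), Real.log_exp]
  ring

lemma Gamma_prod {x : ℝ} (hx : 0 < x) (n : ℕ) :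
    Real.Gamma (x + n) = Real.Gamma x * ∏ j ∈ Finset.range n, (x + j) := by
  induction n with
  | zero => simp
  | succ n ih =>
    rw [Finset.prod_range_succ, show x + (n+1:ℕ) = (x + n) + 1 by push_cast; ring,
      Real.Gamma_add_one, ih]
    · push_cast; ring
    · positivity


lemma logGamma_shift {x : ℝ} (hx : 0 < x) {n : ℕ} (hn : 1 ≤ n) :
    Real.log (Real.Gamma (x + n + 1)) = x * Real.log n + Real.log (Nat.factorial n : ℝ)
      + Real.log (Real.Gamma x) - Real.log (Real.GammaSeq x n) := by
  have hn0 : (0:ℝ) < n := by exact_mod_cast hn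
  have hΓx : 0 < Real.Gamma x := Real.Gamma_pos_of_pos hx
  have hΓ1 : 0 < Real.Gamma (x + n + 1) :=
    Real.Gamma_pos_of_pos (by positivity)
  have hprod : ∏ j ∈ Finset.range (n+1), (x + j) = Real.Gamma (x + n + 1) / Real.Gamma x := by
    rw [show x + (n:ℝ) + 1 = x + ((n+1:ℕ):ℝ) by push_cast; ring, Gamma_prod hx (n+1)]
    field_simp
  have hGS : Real.GammaSeq x n = (n:ℝ) ^ x * (Nat.factorial n : ℝ) * Real.Gamma x
      / Real.Gamma (x + n + 1) := by
    rw [Real.GammaSeq, hprod]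
    field_simp
  rw [hGS]
  have h1 : (0:ℝ) < (n:ℝ) ^ x := rpow_pos_of_pos hn0 x
  have h2 : (0:ℝ) < (Nat.factorial n : ℝ) := by exact_mod_cast (Nat.factorial_pos n)
  rw [Real.log_div (by positivity) hΓ1.ne', Real.log_mul (by positivity) hΓx.ne',
    Real.log_mul h1.ne' h2.ne', Real.log_rpow hn0]
  ring

lemma A_lim {x : ℝ} (hx : 0 < x) :
    Tendsto (fun n : ℕ => Real.log (Real.Gamma (x + n)) - (x + n - 1/2) * Real.log (x + n) + (x + n))
      atTop (𝓝 ((1/2) * Real.log (2*π))) := by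
  rw [← tendsto_add_atTop_iff_nat 1]
  have hΓx : 0 < Real.Gamma x := Real.Gamma_pos_of_pos hx
  -- limit pieces
  have l2 : Tendsto (fun n : ℕ => Real.log (Real.Gamma x) - Real.log (Real.GammaSeq x n))
      atTop (𝓝 0) := by
    have := ((Real.continuousAt_log hΓx.ne').tendsto).comp (Real.GammaSeq_tendsto_Gamma x)
    simpa using (tendsto_const_nhds (x := Real.log (Real.Gamma x))).sub this
  have lL : Tendsto (fun n : ℕ => Real.log (1 + (x+1)/n)) atTop (𝓝 0) := by
    have h0 : Tendsto (fun n : ℕ => 1 + (x+1)/(n:ℝ)) atTop (𝓝 1) := by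
      simpa using (tendsto_const_nhds (x := (1:ℝ))).add
        (tendsto_const_div_atTop_nhds_zero_nat (x+1))
    have := ((Real.continuousAt_log one_ne_zero).tendsto).comp h0
    simpa [Function.comp_def] using this
  have lnL : Tendsto (fun n : ℕ => (n:ℝ) * Real.log (1 + (x+1)/n)) atTop (𝓝 (x+1)) :=
    (Real.tendsto_mul_log_one_add_div_atTop (x+1)).comp tendsto_natCast_atTop_atTop
  have l3 : Tendsto (fun n : ℕ => -((x + n + 1/2) * Real.log (1 + (x+1)/n)) + (x+1))
      atTop (𝓝 0) := by
    have : Tendsto (fun n : ℕ => -((x + 1/2) * Real.log (1 + (x+1)/n))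
        - (n:ℝ) * Real.log (1 + (x+1)/n) + (x+1)) atTop (𝓝 (-((x+1/2) * 0) - (x+1) + (x+1))) :=
      (((lL.const_mul (x+1/2)).neg).sub lnL).add_const _
    simp only [mul_zero, neg_zero, zero_sub, neg_add_cancel] at this
    apply this.congr
    intro n
    ring
  have main : Tendsto (fun n : ℕ =>
      (Real.log (Nat.factorial n : ℝ) - ((n:ℝ) + 1/2) * Real.log n + n)
      + (Real.log (Real.Gamma x) - Real.log (Real.GammaSeq x n))
      + (-((x + n + 1/2) * Real.log (1 + (x+1)/n)) + (x+1)))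
      atTop (𝓝 ((1/2) * Real.log (2*π))) := by
    simpa using (S_lim.add l2).add l3
  apply main.congr'
  filter_upwards [eventually_ge_atTop 1] with n hn
  have hn0 : (0:ℝ) < n := by exact_mod_cast hn
  have hxlog : Real.log (x + (n:ℝ) + 1) = Real.log n + Real.log (1 + (x+1)/n) := by
    rw [← Real.log_mul hn0.ne' (by positivity)]
    congr 1
    field_simp
    ring
  have hlogG := logGamma_shift hx hn
  push_cast
  rw [show x + ((n:ℝ)+1) = x + n + 1 by ring, hlogG, hxlog]
  ring

noncomputable def sE (x : ℝ) : ℝ :=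
  Real.log (Real.Gamma x) - ((x - 1/2) * Real.log x - x + smu x)

lemma sE_step {x : ℝ} (hx : 0 < x) : sE (x + 1) = sE x := by
  have hΓ : 0 < Real.Gamma x := Real.Gamma_pos_of_pos hx
  have h1 : Real.log (Real.Gamma (x+1)) = Real.log x + Real.log (Real.Gamma x) := by
    rw [Real.Gamma_add_one hx.ne', Real.log_mul hx.ne' hΓ.ne']
  have h2 : Real.log (1 + 1/x) = Real.log (x+1) - Real.log x := by
    rw [show (1:ℝ) + 1/x = (x+1)/x by field_simp, Real.log_div (by positivity) hx.ne']
  have h3 := smu_rec hx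
  simp only [sE, h1]
  rw [h3, sf, h2]
  ring

lemma sE_add_nat {x : ℝ} (hx : 0 < x) (n : ℕ) : sE (x + n) = sE x := by
  induction n with
  | zero => simp
  | succ n ih =>
    rw [show x + ((n+1:ℕ):ℝ) = (x + n) + 1 by push_cast; ring, sE_step (by positivity), ih]

lemma smu_shift_lim {x : ℝ} (hx : 0 < x) :
    Tendsto (fun n : ℕ => smu (x + n)) atTop (𝓝 0) := by
  have hb : Tendsto (fun n : ℕ => 1/(12*(x+(n:ℝ)))) atTop (𝓝 0) := by
    apply Tendsto.comp tendsto_inv_atTop_zero ?_ |>.congr (fun n => by rw [Function.comp, one_div])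
    have : Tendsto (fun n : ℕ => x + (n:ℝ)) atTop atTop :=
      tendsto_atTop_add_const_left _ _ (tendsto_natCast_atTop_atTop (R := ℝ))
    exact this.const_mul_atTop (by norm_num)
  exact squeeze_zero (fun n => smu_nonneg (by positivity)) (fun n => smu_le (by positivity)) hb

lemma sE_eq {x : ℝ} (hx : 0 < x) : sE x = (1/2) * Real.log (2*π) := by
  have h1 : Tendsto (fun n : ℕ => sE (x + n)) atTop (𝓝 ((1/2) * Real.log (2*π))) := by
    have := (A_lim hx).sub (smu_shift_lim hx)
    simp only [sub_zero] at this
    apply this.congr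
    intro n
    rw [sE]
    ring
  have h2 : Tendsto (fun n : ℕ => sE (x + n)) atTop (𝓝 (sE x)) := by
    simp only [fun n : ℕ => sE_add_nat hx n]
    exact tendsto_const_nhds
  exact tendsto_nhds_unique h2 h1

theorem stirling_two_sided (x : ℝ) (hx : 0 < x) :
    (2 * π) ^ ((1:ℝ)/2) * x ^ (x - 1/2) * Real.exp (-x) ≤ Real.Gamma x ∧
    Real.Gamma x ≤ (2 * π) ^ ((1:ℝ)/2) * Real.exp (1 / (12 * x)) * x ^ (x - 1/2) * Real.exp (-x) := by
  have hΓ : 0 < Real.Gamma x := Real.Gamma_pos_of_pos hx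
  have h2π : (0:ℝ) < 2*π := by positivity
  have hlog : Real.log (Real.Gamma x)
      = (1/2) * Real.log (2*π) + ((x - 1/2) * Real.log x - x + smu x) := by
    have := sE_eq hx
    rw [sE] at this
    linarith
  have hΓeq : Real.Gamma x = Real.exp ((1/2) * Real.log (2*π)
      + ((x - 1/2) * Real.log x - x + smu x)) := by
    rw [← hlog, Real.exp_log hΓ]
  have hbase : (2 * π) ^ ((1:ℝ)/2) * x ^ (x - 1/2) * Real.exp (-x)
      = Real.exp ((1/2) * Real.log (2*π) + ((x - 1/2) * Real.log x - x)) := by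
    rw [Real.rpow_def_of_pos h2π, Real.rpow_def_of_pos hx, ← Real.exp_add, ← Real.exp_add]
    congr 1
    ring
  constructor
  · rw [hΓeq, hbase]
    apply Real.exp_le_exp.mpr
    have := smu_nonneg hx
    linarith
  · have hupper : (2 * π) ^ ((1:ℝ)/2) * Real.exp (1 / (12 * x)) * x ^ (x - 1/2) * Real.exp (-x)
        = Real.exp ((1/2) * Real.log (2*π) + ((x - 1/2) * Real.log x - x) + 1/(12*x)) := by
      rw [Real.rpow_def_of_pos h2π, Real.rpow_def_of_pos hx, ← Real.exp_add, ← Real.exp_add,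
        ← Real.exp_add]
      congr 1
      ring
    rw [hΓeq, hupper]
    apply Real.exp_le_exp.mpr
    have := smu_le hx
    linarith
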